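/- Let G be a finitely generated, torsion-free, nilpotent group with finite symmetric generating set S, and let a, b, g ∈ G. If the distances dist_S(a^k, g b^k) are bounded over all positive integers k (i.e., sup_{k∈ℤ⁺} dist_S(a^k, g b^k) < ∞), then b = g⁻¹ a g. -/

import Mathlib

open scoped Pointwise

/-- The Cayley graph of a group `G` with respect to a symmetric set `S`
not containing the identity: `g` is adjacent to `h` iff `g⁻¹ * h ∈ S`. -/
def cayleyGraph {G : Type*} [Group G] (S : Set G)
    (hsymm : ∀ s ∈ S, s⁻¹ ∈ S) (hid : (1 : G) ∉ S) : SimpleGraph G where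
  Adj g h := g⁻¹ * h ∈ S
  symm := by
    refine ⟨?_⟩
    intro g h hgh
    have h2 := hsymm _ hgh
    simpa [mul_inv_rev] using h2
  loopless := by
    refine ⟨?_⟩
    intro g hg
    simp only [inv_mul_cancel] at hg
    exact hid hg

/-- Torsion-free monoid, with the meaning `Monoid.IsTorsionFree` had in the older Mathlib. -/
def Monoid.IsTorsionFree (G : Type*) [Monoid G] : Prop :=
  ∀ g : G, g ≠ 1 → ¬IsOfFinOrder g

section UniqueRoots

variable {G : Type*} [Group G]

/-- An element of `Z_{j+1}` is central modulo `Z_j`. -/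
private lemma mk_central_of_mem_ucs_succ {j : ℕ} {d : G}
    (hd : d ∈ Subgroup.upperCentralSeries G (j + 1)) :
    (QuotientGroup.mk d : G ⧸ Subgroup.upperCentralSeries G j) ∈
      Subgroup.center (G ⧸ Subgroup.upperCentralSeries G j) := by
  rw [Subgroup.mem_center_iff]
  intro q
  induction q using QuotientGroup.induction_on with
  | H y =>
    show QuotientGroup.mk (y * d) = QuotientGroup.mk (d * y)
    rw [QuotientGroup.eq]
    have h1 : d * y⁻¹ * d⁻¹ * y ∈ Subgroup.upperCentralSeries G j := by
      have := mem_upperCentralSeries_succ_iff.mp hd y⁻¹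
      simpa [commutatorElement_def] using this
    have h2 : d⁻¹ * (d * y⁻¹ * d⁻¹ * y) * d⁻¹⁻¹ ∈ Subgroup.upperCentralSeries G j :=
      (inferInstance : (Subgroup.upperCentralSeries G j).Normal).conj_mem _ h1 d⁻¹
    have h5 : (y * d)⁻¹ * (d * y) = (d⁻¹ * (d * y⁻¹ * d⁻¹ * y) * d⁻¹⁻¹)⁻¹ := by group
    rw [h5]
    exact inv_mem h2

/-- In a torsion-free group, if `x ∈ Z_{j+1}` and `x ^ n ∈ Z_j` with `n > 0`,
then already `x ∈ Z_j`. -/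
private lemma mem_ucs_of_pow_mem (htf : Monoid.IsTorsionFree G) :
    ∀ j : ℕ, ∀ x : G, ∀ n : ℕ, 0 < n → x ∈ Subgroup.upperCentralSeries G (j + 1) →
      x ^ n ∈ Subgroup.upperCentralSeries G j → x ∈ Subgroup.upperCentralSeries G j := by
  intro j
  induction j with
  | zero =>
    intro x n hn _ hxn
    rw [upperCentralSeries_zero, Subgroup.mem_bot] at hxn ⊢
    by_contra hx1
    exact htf x hx1 (isOfFinOrder_iff_pow_eq_one.mpr ⟨n, hn, hxn⟩)
  | succ j ih =>
    intro x n hn hx hxn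
    rw [mem_upperCentralSeries_succ_iff]
    intro g
    set c : G := x * g * x⁻¹ * g⁻¹ with hc_def
    have hc : c ∈ Subgroup.upperCentralSeries G (j + 1) :=
      mem_upperCentralSeries_succ_iff.mp hx g
    refine ih c n hn hc ?_
    have key : ∀ k : ℕ,
        (QuotientGroup.mk (x ^ k * g * (x ^ k)⁻¹ * g⁻¹) :
          G ⧸ Subgroup.upperCentralSeries G j) = (QuotientGroup.mk c) ^ k := by
      intro k
      induction k with
      | zero => simp
      | succ k ihk =>
        have hck : x ^ k * g * (x ^ k)⁻¹ * g⁻¹ ∈ Subgroup.upperCentralSeries G (j + 1) :=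
          mem_upperCentralSeries_succ_iff.mp (pow_mem hx k) g
        have hcenk := mk_central_of_mem_ucs_succ (j := j) hck
        have hsplit : x ^ (k + 1) * g * (x ^ (k + 1))⁻¹ * g⁻¹
            = x * (x ^ k * g * (x ^ k)⁻¹ * g⁻¹) * x⁻¹ * c := by
          rw [hc_def, pow_succ']; group
        rw [hsplit]
        rw [QuotientGroup.mk_mul, QuotientGroup.mk_mul, QuotientGroup.mk_mul,
          QuotientGroup.mk_inv]
        rw [show ((QuotientGroup.mk x : G ⧸ Subgroup.upperCentralSeries G j) *
          QuotientGroup.mk (x ^ k * g * (x ^ k)⁻¹ * g⁻¹)) =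
          QuotientGroup.mk (x ^ k * g * (x ^ k)⁻¹ * g⁻¹) * QuotientGroup.mk x from
          (Subgroup.mem_center_iff.mp hcenk _)]
        rw [ihk, pow_succ]
        group
    have hn' : x ^ n * g * (x ^ n)⁻¹ * g⁻¹ ∈ Subgroup.upperCentralSeries G j :=
      mem_upperCentralSeries_succ_iff.mp hxn g
    have h1 : ((QuotientGroup.mk c : G ⧸ Subgroup.upperCentralSeries G j)) ^ n = 1 := by
      rw [← key n]
      rwa [QuotientGroup.eq_one_iff]
    rw [← QuotientGroup.mk_pow, QuotientGroup.eq_one_iff] at h1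
    exact h1

/-- Unique roots in torsion-free nilpotent groups. -/
lemma eq_of_pow_eq_pow_nilpotent [Group.IsNilpotent G]
    (htf : Monoid.IsTorsionFree G) {x y : G} {n : ℕ} (hn : 0 < n)
    (h : x ^ n = y ^ n) : x = y := by
  suffices H : ∀ j : ℕ, ∀ u v : G, u ^ n = v ^ n →
      u⁻¹ * v ∈ Subgroup.upperCentralSeries G j → u = v by
    obtain ⟨m, hm⟩ := Group.IsNilpotent.nilpotent' (G := G)
    exact H m x y h (by rw [hm]; trivial)
  intro j
  induction j with
  | zero =>
    intro u v h' hj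
    rw [upperCentralSeries_zero, Subgroup.mem_bot] at hj
    exact inv_mul_eq_one.mp hj
  | succ j ih =>
    intro u v h' hj
    set d : G := u⁻¹ * v with hd_def
    have hv : v = u * d := by rw [hd_def]; group
    have hcen := mk_central_of_mem_ucs_succ (j := j) hj
    have hcomm : Commute (QuotientGroup.mk u : G ⧸ Subgroup.upperCentralSeries G j)
        (QuotientGroup.mk d) :=
      (Subgroup.mem_center_iff.mp hcen _)
    have h3 : ((QuotientGroup.mk d : G ⧸ Subgroup.upperCentralSeries G j)) ^ n = 1 := by
      have h4 : ((QuotientGroup.mk u : G ⧸ Subgroup.upperCentralSeries G j) *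
          QuotientGroup.mk d) ^ n = (QuotientGroup.mk u) ^ n := by
        rw [← QuotientGroup.mk_mul, ← hv, ← QuotientGroup.mk_pow, ← h',
          QuotientGroup.mk_pow]
      rw [hcomm.mul_pow] at h4
      exact mul_eq_left.mp h4
    rw [← QuotientGroup.mk_pow, QuotientGroup.eq_one_iff] at h3
    have hd : d ∈ Subgroup.upperCentralSeries G j := mem_ucs_of_pow_mem htf j d n hn hj h3
    exact ih u v h' hd

end UniqueRoots

section Cayley

variable {G : Type*} [Group G] {S : Set G} {hsymm : ∀ s ∈ S, s⁻¹ ∈ S}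
  {hid : (1 : G) ∉ S}

private lemma cayley_reachable_one (hgen : Subgroup.closure S = ⊤) (x : G) :
    (cayleyGraph S hsymm hid).Reachable 1 x := by
  have hmulL : ∀ (z : G) {u v : G}, (cayleyGraph S hsymm hid).Reachable u v →
      (cayleyGraph S hsymm hid).Reachable (z * u) (z * v) := by
    intro z u v huv
    let f : cayleyGraph S hsymm hid →g cayleyGraph S hsymm hid :=
      ⟨fun w => z * w, by
        intro p q hpq
        change p⁻¹ * q ∈ S at hpq
        show (z * p)⁻¹ * (z * q) ∈ S
        simpa [mul_assoc] using hpq⟩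
    exact huv.map f
  have hx : x ∈ Subgroup.closure S := by rw [hgen]; trivial
  induction hx using Subgroup.closure_induction with
  | mem s hs =>
    exact SimpleGraph.Adj.reachable (show (1:G)⁻¹ * s ∈ S by simpa using hs)
  | one => exact SimpleGraph.Reachable.refl 1
  | mul p q hp hq ihp ihq =>
    exact ihp.trans (by simpa using hmulL p ihq)
  | inv p hp ihp =>
    have := hmulL p⁻¹ ihp
    simpa using this.symm

private lemma cayley_walk_mem {x y : G}
    (p : (cayleyGraph S hsymm hid).Walk x y) :
    x⁻¹ * y ∈ (insert (1 : G) S) ^ p.length := by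
  induction p with
  | nil => simp
  | @cons u v w h p ih =>
    have h1 : u⁻¹ * v ∈ insert (1 : G) S := Set.mem_insert_of_mem _ h
    have : u⁻¹ * w = (u⁻¹ * v) * (v⁻¹ * w) := by group
    rw [SimpleGraph.Walk.length_cons, pow_succ', this]
    exact Set.mul_mem_mul h1 ih

private lemma insert_pow_finite (hfin : S.Finite) (n : ℕ) :
    ((insert (1 : G) S) ^ n).Finite := by
  induction n with
  | zero => simpa using Set.finite_one
  | succ n ih => rw [pow_succ]; exact ih.mul (hfin.insert 1)

end Cayley

/-- **Lemma 2.7(10).** In a finitely generated, torsion-free, nilpotent group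
`G` with finite symmetric generating set `S`: if the distances
`dist_S(aᵏ, g·bᵏ)` are bounded over `k ∈ ℤ⁺`, then `b = g⁻¹ a g`. -/
theorem conjugate_of_bounded_distance
    {G : Type*} [Group G] [Group.FG G] [Group.IsNilpotent G]
    (htf : Monoid.IsTorsionFree G)
    (S : Set G) (hfin : S.Finite)
    (hsymm : ∀ t ∈ S, t⁻¹ ∈ S) (hid : (1 : G) ∉ S)
    (hgen : Subgroup.closure S = ⊤)
    (a b g : G)
    (hbdd : ∃ C : ℕ, ∀ k : ℕ, 0 < k →
      (cayleyGraph S hsymm hid).dist (a ^ k) (g * b ^ k) ≤ C) :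
    b = g⁻¹ * a * g := by
  obtain ⟨C, hC⟩ := hbdd
  have hconjpow : ∀ (u w : G) (n : ℕ), (u⁻¹ * w * u) ^ n = u⁻¹ * w ^ n * u := by
    intro u w n
    induction n with
    | zero => simp
    | succ n ih => rw [pow_succ, pow_succ, ih]; group
  have hreach : ∀ x y : G, (cayleyGraph S hsymm hid).Reachable x y := fun x y =>
    (cayley_reachable_one hgen x).symm.trans (cayley_reachable_one hgen y)
  have hmem : Set.MapsTo (fun k : ℕ => (a ^ k)⁻¹ * (g * b ^ k)) (Set.Ioi 0)
      ((insert (1 : G) S) ^ C) := by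
    intro k hk
    obtain ⟨p, hp⟩ := (hreach (a ^ k) (g * b ^ k)).exists_walk_length_eq_dist
    have h1 := cayley_walk_mem p
    have h2 : p.length ≤ C := by rw [hp]; exact hC k hk
    exact Set.pow_subset_pow_right (Set.mem_insert 1 S) h2 h1
  obtain ⟨k, hk, l, hl, hne, heq⟩ :=
    (Set.Ioi_infinite 0).exists_ne_map_eq_of_mapsTo hmem (insert_pow_finite hfin C)
  have key : ∀ k l : ℕ, 0 < k → k < l →
      (a ^ k)⁻¹ * (g * b ^ k) = (a ^ l)⁻¹ * (g * b ^ l) → b = g⁻¹ * a * g := by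
    intro k l hk hkl he
    set m := l - k with hm
    have hm0 : 0 < m := Nat.sub_pos_of_lt hkl
    have hlm : l = k + m := by omega
    rw [hlm] at he
    have e' : a ^ (k + m) * ((a ^ k)⁻¹ * (g * b ^ k)) = g * b ^ (k + m) := by
      rw [he, mul_inv_cancel_left]
    rw [pow_add, pow_mul_comm, mul_assoc, mul_inv_cancel_left] at e'
    rw [add_comm k m, pow_add] at e'
    have e2 : a ^ m * g * b ^ k = g * b ^ m * b ^ k := by
      rw [mul_assoc, e', mul_assoc]
    have e3 : a ^ m * g = g * b ^ m := mul_right_cancel e2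
    have e4 : b ^ m = g⁻¹ * a ^ m * g := by
      have e4' := congrArg (fun t => g⁻¹ * t) e3
      simpa [mul_assoc] using e4'.symm
    have e5 : (g⁻¹ * a * g) ^ m = b ^ m := by rw [hconjpow, ← e4]
    exact (eq_of_pow_eq_pow_nilpotent htf hm0 e5).symm
  rcases lt_or_gt_of_ne hne with h | h
  · exact key k l hk h heq
  · exact key l k hl h heq.symm
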